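/- In the random weighted network model, for every integer m ≥ 2 the m-th moment of the centered normalized entry C_{ij} := W_{ij}/(μ·√(ω_i ω_j)) − ρ·√(ω_i ω_j) satisfies E[C_{ij}^m] = ρ·∑_{l=0}^{m−2} binom(m,l)·(−ρ)^l·(ν_{m−l}/μ^{m−l})·(ω_i ω_j)^{l+1−m/2} + (1−m)·(−ρ)^m·(ω_i ω_j)^{m/2}, where the exponents of ω_i ω_j are real powers and ν_k := E[W_{ij}^k | L_{ij} = 1]. -/

import Mathlib

open MeasureTheory

/-- In the random weighted network model, for `m ≥ 2`, the `m`-th moment of the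
centered normalized entry `C i j = W i j / (ν 1 ·√(ω i · ω j)) − ρ·√(ω i · ω j)`
is given by the binomial-expansion formula, with real powers of `ω i * ω j`. -/
theorem centered_entry_moment
    {Ω : Type*} [MeasurableSpace Ω] (P : Measure Ω) [IsProbabilityMeasure P]
    (n : ℕ) (ω : Fin n → ℝ) (hω : ∀ i, 0 < ω i)
    (ρ : ℝ) (hρ : ρ = 1 / ∑ k, ω k)
    (hp : ∀ i j, ρ * ω i * ω j ≤ 1)
    (L : Fin n → Fin n → Ω → ℕ)
    (hL01 : ∀ i j x, L i j x = 0 ∨ L i j x = 1)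
    (hLmeas : ∀ i j, Measurable (L i j))
    (hPL : ∀ i j, P {x | L i j x = 1} = ENNReal.ofReal (ρ * ω i * ω j))
    (W : Fin n → Fin n → Ω → ℝ)
    (hWmeas : ∀ i j, Measurable (W i j))
    (hW0 : ∀ i j x, 0 ≤ W i j x) (hW1 : ∀ i j x, W i j x ≤ 1)
    (hWzero : ∀ i j, ∀ᵐ x ∂P, L i j x = 0 → W i j x = 0)
    -- conditional moments ν k = E[W^k | L = 1]
    (ν : ℕ → ℝ) (hμ : 0 < ν 1)
    (hν : ∀ i j k, ∫ x in {x | L i j x = 1}, (W i j x) ^ k ∂P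
      = ν k * (P {x | L i j x = 1}).toReal)
    (i j : Fin n) (m : ℕ) (hm : 2 ≤ m) :
    ∫ x, (W i j x / (ν 1 * Real.sqrt (ω i * ω j))
          - ρ * Real.sqrt (ω i * ω j)) ^ m ∂P
      = ρ * ∑ l ∈ Finset.range (m - 1),
            (Nat.choose m l : ℝ) * (-ρ) ^ l * (ν (m - l) / (ν 1) ^ (m - l)) *
              (ω i * ω j) ^ ((l : ℝ) + 1 - (m : ℝ) / 2)
        + (1 - (m : ℝ)) * (-ρ) ^ m * (ω i * ω j) ^ ((m : ℝ) / 2) := by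
  -- basic positivity
  have hsum : 0 < ∑ k, ω k :=
    Finset.sum_pos (fun k _ => hω k) ⟨i, Finset.mem_univ i⟩
  have hρ0 : 0 < ρ := by rw [hρ]; positivity
  set u : ℝ := ω i * ω j with hu_def
  have hu : 0 < u := mul_pos (hω i) (hω j)
  set s : ℝ := Real.sqrt u with hs_def
  have hs : 0 < s := Real.sqrt_pos.mpr hu
  have hs2 : s ^ 2 = u := Real.sq_sqrt hu.le
  have hp0 : 0 < ρ * u := mul_pos hρ0 hu
  -- moments of W
  have hWint : ∀ k : ℕ, Integrable (fun x => (W i j x) ^ k) P := by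
    intro k
    apply (integrable_const (1 : ℝ)).mono'
      (((hWmeas i j).pow_const k).aestronglyMeasurable)
    filter_upwards with x
    rw [Real.norm_eq_abs, abs_of_nonneg (pow_nonneg (hW0 i j x) k)]
    exact pow_le_one₀ (hW0 i j x) (hW1 i j x)
  have hS : MeasurableSet {x | L i j x = 1} :=
    (hLmeas i j) (measurableSet_singleton 1)
  have hJ : ∀ k : ℕ, k ≠ 0 → ∫ x, (W i j x) ^ k ∂P = ν k * (ρ * u) := by
    intro k hk
    have hsplit := integral_add_compl hS (hWint k)
    have hzero : ∫ x in {x | L i j x = 1}ᶜ, (W i j x) ^ k ∂P = 0 := by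
      apply integral_eq_zero_of_ae
      rw [Filter.EventuallyEq, ae_restrict_iff' hS.compl]
      filter_upwards [hWzero i j] with x hx hxc
      have hx0 : L i j x = 0 := (hL01 i j x).resolve_right hxc
      simp [hx hx0, zero_pow hk]
    rw [← hsplit, hzero, add_zero, hν i j k, hPL i j,
      ENNReal.toReal_ofReal (by rw [mul_assoc]; exact hp0.le), mul_assoc]
  have hJ0 : ∫ x, (W i j x) ^ 0 ∂P = 1 := by simp
  -- expand the power
  have hexp : ∀ x : Ω,
      (W i j x / (ν 1 * s) - ρ * s) ^ m
        = ∑ k ∈ Finset.range (m + 1),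
            (W i j x) ^ k * (((ν 1 * s)⁻¹) ^ k * ((-(ρ * s)) ^ (m - k) * (m.choose k : ℝ))) := by
    intro x
    rw [sub_eq_add_neg, add_pow]
    refine Finset.sum_congr rfl fun k _ => ?_
    rw [div_eq_mul_inv, mul_pow]
    ring
  have hint : ∫ x, (W i j x / (ν 1 * s) - ρ * s) ^ m ∂P
      = ∑ k ∈ Finset.range (m + 1),
          (∫ x, (W i j x) ^ k ∂P) *
            (((ν 1 * s)⁻¹) ^ k * ((-(ρ * s)) ^ (m - k) * (m.choose k : ℝ))) := by
    simp only [hexp]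
    rw [integral_finset_sum _ (fun k _ => (hWint k).mul_const _)]
    exact Finset.sum_congr rfl fun k _ => integral_mul_const _ _
  rw [hint]
  -- reduce to m = m' + 2
  obtain ⟨m', rfl⟩ : ∃ m', m = m' + 2 := ⟨m - 2, by omega⟩
  clear hm
  set f : ℕ → ℝ := fun k =>
    (∫ x, (W i j x) ^ k ∂P) *
      (((ν 1 * s)⁻¹) ^ k * ((-(ρ * s)) ^ (m' + 2 - k) * ((m' + 2).choose k : ℝ))) with hf
  have hpeel : ∑ k ∈ Finset.range (m' + 2 + 1), f k
      = (∑ k ∈ Finset.range (m' + 1), f (k + 2)) + f 1 + f 0 := by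
    rw [Finset.sum_range_succ', Finset.sum_range_succ']
  -- useful rpow facts
  have hum : u ^ ((((m' : ℝ) + 2)) / 2) = s ^ (m' + 2) := by
    rw [show ((m' : ℝ) + 2) / 2 = (1 / 2 : ℝ) * ((m' + 2 : ℕ) : ℝ) by push_cast; ring,
      Real.rpow_mul hu.le, ← Real.sqrt_eq_rpow, Real.rpow_natCast]
  have hrpow : ∀ l : ℕ, u ^ ((l : ℝ) + 1 - ((m' : ℝ) + 2) / 2) = u ^ (l + 1) / s ^ (m' + 2) := by
    intro l
    rw [Real.rpow_sub hu, hum]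
    congr 1
    rw [show ((l : ℝ) + 1) = ((l + 1 : ℕ) : ℝ) by push_cast; ring, Real.rpow_natCast]
  have hmcast : ((m' + 2 : ℕ) : ℝ) = (m' : ℝ) + 2 := by push_cast; ring
  rw [hpeel]
  have htail : f 1 + f 0 = (1 - ((m' : ℝ) + 2)) * (-ρ) ^ (m' + 2) * u ^ (((m' : ℝ) + 2) / 2) := by
    have h1 : f 1 = (ν 1 * (ρ * u)) * (((ν 1 * s)⁻¹) ^ 1 *
        ((-(ρ * s)) ^ (m' + 1) * ((m' + 2).choose 1 : ℝ))) := by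
      simp only [hf]
      rw [hJ 1 one_ne_zero]
      norm_num
    have h0 : f 0 = (-(ρ * s)) ^ (m' + 2) := by
      simp only [hf]; simp
    rw [h1, h0, hum, Nat.choose_one_right]
    have hν1 : ν 1 ≠ 0 := hμ.ne'
    have hsne : s ≠ 0 := hs.ne'
    rw [← hs2]
    push_cast
    field_simp
    ring
  rw [add_assoc, htail]
  have hmain : ∑ k ∈ Finset.range (m' + 1), f (k + 2)
      = ρ * ∑ l ∈ Finset.range (m' + 2 - 1),
          ((m' + 2).choose l : ℝ) * (-ρ) ^ l * (ν (m' + 2 - l) / (ν 1) ^ (m' + 2 - l)) *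
            u ^ ((l : ℝ) + 1 - ((m' + 2 : ℕ) : ℝ) / 2) := by
    rw [Finset.mul_sum]
    have hrange : m' + 2 - 1 = m' + 1 := by omega
    rw [hrange]
    rw [← Finset.sum_range_reflect (fun l => ρ *
      (((m' + 2).choose l : ℝ) * (-ρ) ^ l * (ν (m' + 2 - l) / (ν 1) ^ (m' + 2 - l)) *
        u ^ ((l : ℝ) + 1 - ((m' + 2 : ℕ) : ℝ) / 2))) (m' + 1)]
    refine Finset.sum_congr rfl fun k hk => ?_
    rw [Finset.mem_range] at hk
    have hk' : k ≤ m' := by omega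
    have hl1 : m' + 1 - 1 - k = m' - k := by omega
    rw [hl1]
    have hl2 : m' + 2 - (m' - k) = k + 2 := by omega
    have hl3 : m' + 2 - (k + 2) = m' - k := by omega
    have hchoose : ((m' + 2).choose (m' - k) : ℝ) = ((m' + 2).choose (k + 2) : ℝ) := by
      rw [show m' - k = m' + 2 - (k + 2) by omega, Nat.choose_symm (by omega)]
    simp only [hf]
    rw [hl2, hl3, hchoose, hJ (k + 2) (by omega), hmcast, hrpow (m' - k)]
    have hν1 : ν 1 ≠ 0 := hμ.ne'
    have hsne : s ≠ 0 := hs.ne'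
    have hsm : s ^ (m' + 2) = s ^ (m' - k) * s ^ (k + 2) := by
      rw [← pow_add]; congr 1; omega
    have huk : u ^ (m' - k + 1) = s ^ (2 * (m' - k)) * u := by
      rw [pow_succ, ← hs2, ← pow_mul]
    have hnegpow : (-(ρ * s)) ^ (m' - k) = (-ρ) ^ (m' - k) * s ^ (m' - k) := by
      rw [← neg_mul, mul_pow]
    rw [hnegpow, hsm, huk]
    have h2mk : s ^ (2 * (m' - k)) = s ^ (m' - k) * s ^ (m' - k) := by
      rw [← pow_add]; congr 1; omega
    rw [h2mk]
    field_simp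
    ring_nf
    rw [inv_pow, inv_pow, inv_pow, inv_pow]
    field_simp
  rw [hmain, hmcast]
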